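/- Let n ≥ 1, let x'_1 < … < x'_n be real numbers, let m_1, …, m_n > 0, and define s_k = Σ_{j=1}^{n} m_j (x'_j)^k for k ≥ 0. Let p ≥ 1 and let A = (a_{i,j})_{0≤i,j≤n+p} be a real (n+p+1)×(n+p+1) matrix satisfying a_{i,j} = s_{i+j} whenever i + j ≤ 2n + p − 1, and write x_j = a_{n+j, n+p−j} for j = 0, 1, …, p (the entries a_{i,j} with i + j ≥ 2n + p + 1 are arbitrary). Then det A = (−1)^{p(p+1)/2} · D_{n−1} · Π_{j=0}^{p} (x_j − s_{2n+p}), where D_{n−1} = det (s_{i+j})_{0≤i,j≤n−1}. In particular det A is independent of the entries a_{i,j} with i + j ≥ 2n + p + 1. -/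
import Mathlib

open Finset

lemma det_antitriangular : ∀ {m : ℕ} (M : Matrix (Fin m) (Fin m) ℝ),
    (∀ i j : Fin m, i.1 + j.1 + 1 < m → M i j = 0) →
    M.det = (-1) ^ (m * (m - 1) / 2) * ∏ i, M i (Fin.rev i) := by
  intro m
  induction m with
  | zero => intro M h; simp [Matrix.det_fin_zero]
  | succ m ih =>
    intro M h
    rw [Matrix.det_succ_row_zero, Finset.sum_eq_single (Fin.last m)]
    · have h' : ∀ i j : Fin m,
          i.1 + j.1 + 1 < m → (M.submatrix Fin.succ Fin.castSucc) i j = 0 := by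
        intro i j hij
        exact h i.succ j.castSucc (by simp [Fin.val_succ]; omega)
      rw [Fin.succAbove_last, ih _ h']
      have hprod : ∏ i : Fin (m + 1), M i (Fin.rev i)
          = M 0 (Fin.last m) * ∏ i : Fin m, (M.submatrix Fin.succ Fin.castSucc) i (Fin.rev i) := by
        rw [Fin.prod_univ_succ, Fin.rev_zero]
        congr 1
        apply Finset.prod_congr rfl
        intro i _
        simp [Matrix.submatrix_apply, ← Fin.rev_succ]
      rw [hprod]
      have hsign : ((-1 : ℝ) ^ (Fin.last m).1) * (-1) ^ (m * (m - 1) / 2)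
          = (-1) ^ ((m + 1) * m / 2) := by
        rw [Fin.val_last, ← pow_add]
        congr 1
        rcases m with _ | q
        · rfl
        · obtain ⟨k, hk⟩ : Even ((q + 1) * q) := by
            rw [mul_comm]; exact Nat.even_mul_succ_self q
          have h2 : (q + 1 + 1) * (q + 1) = (q + 1) * q + 2 * (q + 1) := by ring
          simp only [Nat.add_sub_cancel]
          omega
      rw [show (m + 1) * (m + 1 - 1) / 2 = (m + 1) * m / 2 by rfl, ← hsign]
      ring
    · intro j _ hj
      have : M 0 j = 0 := by
        apply h
        simp only [Fin.val_zero]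
        have := j.isLt
        have : j.1 ≠ m := fun hh => hj (Fin.ext hh)
        omega
      simp [this]
    · simp

/-- Lemma on the determinant `M_{n+p}`: let `s` be the moment sequence of a discrete measure
with `n ≥ 1` mass points, `p ≥ 1`, and let `A` be an `(n+p+1) × (n+p+1)` real matrix with
`A i j = s (i+j)` whenever `i + j ≤ 2n + p - 1` (the remaining entries being arbitrary).
Writing `x_j = A (n+j) (n+p-j)` for `j = 0, …, p`, we have
`det A = (-1)^(p(p+1)/2) · D_{n-1} · ∏_{j=0}^{p} (x_j - s_{2n+p})`. -/
theorem det_hankel_bordered (n : ℕ) (hn : 1 ≤ n)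
    (x' m : Fin n → ℝ) (hx' : StrictMono x') (hm : ∀ j, 0 < m j)
    (s : ℕ → ℝ) (hs : ∀ k : ℕ, s k = ∑ j, m j * x' j ^ k)
    (p : ℕ) (hp : 1 ≤ p)
    (A : Matrix (Fin (n + p + 1)) (Fin (n + p + 1)) ℝ)
    (hA : ∀ i j : Fin (n + p + 1), i.1 + j.1 ≤ 2 * n + p - 1 → A i j = s (i.1 + j.1)) :
    A.det = (-1) ^ (p * (p + 1) / 2) * (Matrix.of fun i j : Fin n => s (i.1 + j.1)).det *
      ∏ j : Fin (p + 1),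
        (A ⟨n + j.1, by have := j.isLt; omega⟩ ⟨n + p - j.1, by have := j.isLt; omega⟩
          - s (2 * n + p)) := by
  classical
  set P : Polynomial ℝ := ∏ j, (Polynomial.X - Polynomial.C (x' j)) with hP
  have hmonic : P.Monic :=
    Polynomial.monic_prod_of_monic _ _ fun j _ => Polynomial.monic_X_sub_C _
  have hdeg : P.natDegree = n := by
    rw [hP, Polynomial.natDegree_prod_of_monic _ _ fun j _ => Polynomial.monic_X_sub_C _]
    simp
  have hcn : P.coeff n = 1 := by
    have := hmonic.coeff_natDegree
    rwa [hdeg] at this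
  have key : ∀ q : ℕ, ∑ t ∈ Finset.range (n + 1), P.coeff t * s (q + t) = 0 := by
    intro q
    have hc : ∀ t ∈ Finset.range (n + 1), P.coeff t * s (q + t)
        = ∑ j, P.coeff t * (m j * x' j ^ (q + t)) := by
      intro t _; rw [hs, Finset.mul_sum]
    rw [Finset.sum_congr rfl hc, Finset.sum_comm]
    refine Finset.sum_eq_zero fun j _ => ?_
    have hev : P.eval (x' j) = ∑ t ∈ Finset.range (n + 1), P.coeff t * x' j ^ t := by
      rw [Polynomial.eval_eq_sum_range, hdeg]
    have hroot : P.eval (x' j) = 0 := by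
      rw [hP, Polynomial.eval_prod]
      apply Finset.prod_eq_zero (Finset.mem_univ j)
      simp
    calc ∑ t ∈ Finset.range (n + 1), P.coeff t * (m j * x' j ^ (q + t))
        = m j * x' j ^ q * ∑ t ∈ Finset.range (n + 1), P.coeff t * x' j ^ t := by
          rw [Finset.mul_sum]
          refine Finset.sum_congr rfl fun t _ => ?_
          rw [pow_add]; ring
      _ = 0 := by rw [← hev, hroot, mul_zero]
  have key2 : ∑ t ∈ Finset.range n, P.coeff t * s (n + p + t) = - s (2 * n + p) := by
    have hk := key (n + p)
    rw [Finset.sum_range_succ, hcn] at hk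
    have h2 : n + p + n = 2 * n + p := by omega
    rw [h2] at hk
    linarith
  -- auxiliary entry function
  set F : ℕ → Fin (n + p + 1) → ℝ :=
    fun k j => if h : k < n + p + 1 then A ⟨k, h⟩ j else 0 with hF
  have hFA : ∀ (k : ℕ) (hk : k < n + p + 1) (j : Fin (n + p + 1)), F k j = A ⟨k, hk⟩ j :=
    fun k hk j => dif_pos hk
  have hFs : ∀ (k : ℕ) (j : Fin (n + p + 1)) (hk : k < n + p + 1),
      k + j.1 ≤ 2 * n + p - 1 → F k j = s (k + j.1) := by
    intro k j hk hkj
    rw [hFA k hk]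
    exact hA ⟨k, hk⟩ j hkj
  -- the row-reduced matrix B and the elementary matrix L
  set B : Matrix (Fin (n + p + 1)) (Fin (n + p + 1)) ℝ := Matrix.of fun i j =>
    if i.1 < n then A i j
    else ∑ t ∈ Finset.range (n + 1), P.coeff t * F (i.1 - n + t) j with hBdef
  set L : Matrix (Fin (n + p + 1)) (Fin (n + p + 1)) ℝ := Matrix.of fun i j =>
    if i.1 < n then (if j = i then 1 else 0)
    else if i.1 - n ≤ j.1 ∧ j.1 ≤ i.1 then P.coeff (j.1 - (i.1 - n)) else 0 with hL
  have hLA : L * A = B := by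
    ext i j
    rw [Matrix.mul_apply]
    by_cases hi : i.1 < n
    · simp [hBdef, hL, hi, ite_mul, Finset.sum_ite_eq']
    · have hBright : B i j = ∑ t ∈ Finset.range (n + 1), P.coeff t * F (i.1 - n + t) j := by
        rw [hBdef]; simp only [Matrix.of_apply]; rw [if_neg hi]
      rw [hBright]
      push_neg at hi
      set g : ℕ → ℝ := fun k =>
        if h : k < n + p + 1 then L i ⟨k, h⟩ * A ⟨k, h⟩ j else 0 with hg
      have l1 : ∑ k : Fin (n + p + 1), L i k * A k j = ∑ k ∈ Finset.range (n + p + 1), g k := by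
        rw [← Fin.sum_univ_eq_sum_range]
        refine Finset.sum_congr rfl fun k _ => ?_
        rw [hg]; simp only [k.isLt, dif_pos]
      rw [l1]
      have l2 : ∑ k ∈ Finset.range (n + p + 1), g k
          = ∑ k ∈ Finset.Icc (i.1 - n) i.1, g k := by
        refine (Finset.sum_subset ?_ ?_).symm
        · intro k hk
          rw [Finset.mem_Icc] at hk
          rw [Finset.mem_range]
          have := i.isLt; omega
        · intro k hk hk'
          rw [Finset.mem_range] at hk
          rw [Finset.mem_Icc] at hk'
          rw [hg]; simp only [dif_pos hk]
          have hL0 : L i ⟨k, hk⟩ = 0 := by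
            rw [hL]; simp only [Matrix.of_apply]
            rw [if_neg (by omega), if_neg (by simpa using hk')]
          rw [hL0, zero_mul]
      rw [l2, ← Finset.Ico_add_one_right_eq_Icc, Finset.sum_Ico_eq_sum_range,
        show i.1 + 1 - (i.1 - n) = n + 1 by omega]
      refine Finset.sum_congr rfl fun t ht => ?_
      rw [Finset.mem_range] at ht
      have hkN : i.1 - n + t < n + p + 1 := by have := i.isLt; omega
      rw [hg]; simp only [dif_pos hkN]
      have hLv : L i ⟨i.1 - n + t, hkN⟩ = P.coeff t := by
        rw [hL]; simp only [Matrix.of_apply]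
        rw [if_neg (by omega), if_pos (by constructor <;> omega)]
        congr 1; omega
      rw [hLv, hFA _ hkN]
  have hLtri : L.BlockTriangular OrderDual.toDual := by
    intro i j hij
    have hij' : i.1 < j.1 := hij
    rw [hL]; simp only [Matrix.of_apply]
    by_cases hi : i.1 < n
    · rw [if_pos hi, if_neg (by intro hh; rw [hh] at hij'; omega)]
    · rw [if_neg hi, if_neg (by omega)]
  have hdetL : L.det = 1 := by
    rw [Matrix.det_of_lowerTriangular L hLtri]
    refine Finset.prod_eq_one fun i _ => ?_
    rw [hL]; simp only [Matrix.of_apply]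
    by_cases hi : i.1 < n
    · simp [hi]
    · rw [if_neg hi, if_pos ⟨by omega, le_refl _⟩,
        show i.1 - (i.1 - n) = n by omega, hcn]
  have hdetB : B.det = A.det := by
    rw [← hLA, Matrix.det_mul, hdetL, one_mul]
  -- entries of B
  have hBrow : ∀ i j : Fin (n + p + 1), n ≤ i.1 →
      B i j = ∑ t ∈ Finset.range (n + 1), P.coeff t * F (i.1 - n + t) j := by
    intro i j hi
    rw [hBdef]; simp only [Matrix.of_apply]; rw [if_neg (by omega)]
  have hBzero : ∀ i j : Fin (n + p + 1), n ≤ i.1 → i.1 + j.1 ≤ 2 * n + p - 1 →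
      B i j = 0 := by
    intro i j hi hij
    rw [hBrow i j hi]
    have hc : ∀ t ∈ Finset.range (n + 1), P.coeff t * F (i.1 - n + t) j
        = P.coeff t * s ((i.1 - n + j.1) + t) := by
      intro t ht
      rw [Finset.mem_range] at ht
      have hlt : i.1 - n + t < n + p + 1 := by have := i.isLt; omega
      rw [hFs _ _ hlt (by omega)]
      congr 2; omega
    rw [Finset.sum_congr rfl hc, key]
  -- the blocks
  set T : Matrix (Fin n) (Fin n) ℝ := Matrix.of fun i j => s (i.1 + j.1) with hT
  set R : Matrix (Fin n) (Fin (p + 1)) ℝ :=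
    fun i j => B ⟨i.1, by have := i.isLt; omega⟩ ⟨n + j.1, by have := j.isLt; omega⟩ with hR
  set Q : Matrix (Fin (p + 1)) (Fin (p + 1)) ℝ :=
    fun i j => B ⟨n + i.1, by have := i.isLt; omega⟩ ⟨n + j.1, by have := j.isLt; omega⟩ with hQ
  have hsplit : B.det = T.det * Q.det := by
    have hstep : B.det = (B.submatrix
        (finSumFinEquiv : Fin n ⊕ Fin (p + 1) ≃ Fin (n + p + 1))
        (finSumFinEquiv : Fin n ⊕ Fin (p + 1) ≃ Fin (n + p + 1))).det :=
      (Matrix.det_submatrix_equiv_self _ B).symm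
    rw [hstep]
    have hblocks : B.submatrix
        (finSumFinEquiv : Fin n ⊕ Fin (p + 1) ≃ Fin (n + p + 1))
        (finSumFinEquiv : Fin n ⊕ Fin (p + 1) ≃ Fin (n + p + 1))
        = Matrix.fromBlocks T R 0 Q := by
      ext i j
      cases i with
      | inl i =>
        cases j with
        | inl j =>
          simp only [Matrix.submatrix_apply, finSumFinEquiv_apply_left,
            Matrix.fromBlocks_apply₁₁]
          have hiv : ((Fin.castAdd (p + 1) i) : Fin (n + p + 1)).1 = i.1 := rfl
          have hjv : ((Fin.castAdd (p + 1) j) : Fin (n + p + 1)).1 = j.1 := rfl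
          rw [hBdef]; simp only [Matrix.of_apply]
          rw [if_pos (by rw [hiv]; exact i.isLt)]
          rw [hT]; simp only [Matrix.of_apply]
          rw [hA _ _ (by rw [hiv, hjv]; have := i.isLt; have := j.isLt; omega)]
          rw [hiv, hjv]
        | inr j =>
          simp only [Matrix.submatrix_apply, finSumFinEquiv_apply_left,
            finSumFinEquiv_apply_right, Matrix.fromBlocks_apply₁₂]
          simp only [hR]
          congr 1 <;> apply Fin.ext <;> rfl
      | inr i =>
        cases j with
        | inl j =>
          simp only [Matrix.submatrix_apply, finSumFinEquiv_apply_right,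
            finSumFinEquiv_apply_left, Matrix.fromBlocks_apply₂₁, Matrix.zero_apply]
          apply hBzero
          · exact Nat.le_add_right n i.1
          · have := i.isLt; have := j.isLt
            show n + i.1 + j.1 ≤ 2 * n + p - 1
            omega
        | inr j =>
          simp only [Matrix.submatrix_apply, finSumFinEquiv_apply_right,
            Matrix.fromBlocks_apply₂₂]
          simp only [hQ]
          congr 1 <;> apply Fin.ext <;> rfl
    rw [hblocks, Matrix.det_fromBlocks_zero₂₁]
  -- Q is anti-triangular
  have hQzero : ∀ i j : Fin (p + 1), i.1 + j.1 + 1 < p + 1 → Q i j = 0 := by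
    intro i j hij
    rw [hQ]
    apply hBzero
    · exact Nat.le_add_right n i.1
    · show n + i.1 + (n + j.1) ≤ 2 * n + p - 1
      omega
  have hQdiag : ∀ i : Fin (p + 1), Q i (Fin.rev i)
      = A ⟨n + i.1, by have := i.isLt; omega⟩ ⟨n + p - i.1, by have := i.isLt; omega⟩
        - s (2 * n + p) := by
    intro i
    have hrev : (Fin.rev i).1 = p - i.1 := by
      rw [Fin.val_rev]; omega
    simp only [hQ]
    have hrow : n ≤ (⟨n + i.1, by have := i.isLt; omega⟩ : Fin (n + p + 1)).1 :=
      Nat.le_add_right n i.1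
    rw [hBrow _ _ hrow]
    simp only [show n + i.1 - n = i.1 from by omega]
    rw [Finset.sum_range_succ, hcn, one_mul]
    have hlast : F (i.1 + n) ⟨n + (Fin.rev i).1, by have := (Fin.rev i).isLt; omega⟩
        = A ⟨n + i.1, by have := i.isLt; omega⟩ ⟨n + p - i.1, by have := i.isLt; omega⟩ := by
      rw [hFA _ (by have := i.isLt; omega)]
      congr 1 <;> apply Fin.ext
      · show i.1 + n = n + i.1; omega
      · show n + (Fin.rev i).1 = n + p - i.1
        rw [hrev]; have := i.isLt; omega
    rw [hlast]
    have hrest : ∑ t ∈ Finset.range n,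
        P.coeff t * F (i.1 + t) ⟨n + (Fin.rev i).1, by have := (Fin.rev i).isLt; omega⟩
        = - s (2 * n + p) := by
      rw [← key2]
      refine Finset.sum_congr rfl fun t ht => ?_
      rw [Finset.mem_range] at ht
      have hlt : i.1 + t < n + p + 1 := by have := i.isLt; omega
      have hi' := i.isLt
      rw [hFs _ _ hlt (by show i.1 + t + (n + (Fin.rev i).1) ≤ 2 * n + p - 1; omega)]
      simp only [Fin.val_mk]
      rw [show i.1 + t + (n + (Fin.rev i).1) = n + p + t from by omega]
    rw [hrest]
    ring
  have hdetQ : Q.det = (-1) ^ (p * (p + 1) / 2) *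
      ∏ j : Fin (p + 1),
        (A ⟨n + j.1, by have := j.isLt; omega⟩ ⟨n + p - j.1, by have := j.isLt; omega⟩
          - s (2 * n + p)) := by
    rw [det_antitriangular Q hQzero]
    rw [show (p + 1) * (p + 1 - 1) / 2 = p * (p + 1) / 2 by rw [Nat.add_sub_cancel, Nat.mul_comm]]
    congr 1
    exact Finset.prod_congr rfl fun i _ => hQdiag i
  rw [← hdetB, hsplit, hdetQ]
  ring
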